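/- arXiv:1401.7802 — 4 statements merged into one kernel-verified Lean document; each statement's English description precedes it below -/
import Mathlib

section
/- The cubic polynomial in λ with coefficients a = -108 α₁³, b = -27 α₁² (1+α₁+α₂)² - 324 α₁² (1-(1+α₁)(1+α₂)), and appropriate c, d (the discriminant polynomial of the M=2 spectral cubic) has three real roots whenever α₁, α₂ > 0. -/
/-- The discriminant cubic of the M = 2 spectral problem has three real roots for
α₁, α₂ > 0: the discriminant of aλ³+bλ²+cλ+d with the given coefficients is
nonnegative. -/
theorem m2_discriminant_cubic_three_real_roots (α₁ α₂ : ℝ) (h₁ : 0 < α₁) (h₂ : 0 < α₂) :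
    let a : ℝ := -108 * α₁ ^ 3
    let b : ℝ := -27 * α₁ ^ 2 * (1 + α₁ + α₂) ^ 2 - 324 * α₁ ^ 2 * (1 - (1 + α₁) * (1 + α₂))
    let c : ℝ := -216 * α₁ * (1 + α₁ + α₂) ^ 2 * (1 - (1 + α₁) * (1 + α₂))
        - 324 * α₁ * (1 - (1 + α₁) * (1 + α₂)) ^ 2
        - 162 * α₁ * (1 + α₁ + α₂) *
            (α₁ * (1 + α₁) + α₂ * (1 + α₂) + α₁ * α₂ * (α₁ + α₂))
    let d : ℝ := -27 * (α₁ - 1) ^ 2 * (α₁ - α₂) ^ 2 * (α₂ - 1) ^ 2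
    0 ≤ 18 * a * b * c * d - 4 * b ^ 3 * d + b ^ 2 * c ^ 2 - 4 * a * c ^ 3
        - 27 * a ^ 2 * d ^ 2 := by
  intro a b c d
  have hQ : 0 ≤ (1 + α₁ + α₂) ^ 3 - 27 * α₁ * α₂ := by
    nlinarith [sq_nonneg (α₁ - α₂), sq_nonneg (α₁ - 1), sq_nonneg (α₂ - 1),
      sq_nonneg (α₁ + α₂ - 2), mul_pos h₁ h₂, h₁.le, h₂.le,
      mul_nonneg (mul_nonneg h₁.le h₂.le) (sq_nonneg (α₁ - α₂))]
  have key : 18 * a * b * c * d - 4 * b ^ 3 * d + b ^ 2 * c ^ 2 - 4 * a * c ^ 3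
        - 27 * a ^ 2 * d ^ 2
      = 8503056 * α₁ ^ 7 * α₂ * ((1 + α₁ + α₂) ^ 3 - 27 * α₁ * α₂) ^ 3 := by
    simp only [a, b, c, d]; ring
  rw [key]
  positivity
end

section
/- For M=2 with α₁ = α₂ = α, the edge points λ_± = (-1 + 20α + 8α² ± (1+8α)^{3/2})/(8α) satisfy: λ₋ ≤ 0 for 0 < α ≤ 1, λ₋ > 0 for α > 1, and λ₊ ≥ 4 for all α > 0. -/
/-- For M = 2 with α₁ = α₂ = α, the edge points
λ_± = (-1 + 20α + 8α² ± (1+8α)^{3/2})/(8α) satisfy: λ₋ ≤ 0 for 0 < α ≤ 1,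
λ₋ > 0 for α > 1, and λ₊ ≥ 4 for all α > 0. -/
theorem m2_equal_alpha_edges (α : ℝ) (hα : 0 < α) :
    let lamM : ℝ := (-1 + 20 * α + 8 * α ^ 2 - Real.sqrt ((1 + 8 * α) ^ 3)) / (8 * α)
    let lamP : ℝ := (-1 + 20 * α + 8 * α ^ 2 + Real.sqrt ((1 + 8 * α) ^ 3)) / (8 * α)
    (α ≤ 1 → lamM ≤ 0) ∧ (1 < α → 0 < lamM) ∧ 4 ≤ lamP := by
  intro lamM lamP
  set s : ℝ := Real.sqrt ((1 + 8 * α) ^ 3) with hs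
  have hsnn : 0 ≤ s := Real.sqrt_nonneg _
  have hssq : s ^ 2 = (1 + 8 * α) ^ 3 := by
    rw [hs, sq, Real.mul_self_sqrt (by positivity)]
  have h8 : (0:ℝ) < 8 * α := by linarith
  refine ⟨?_, ?_, ?_⟩
  · intro h1
    have hle : -1 + 20 * α + 8 * α ^ 2 ≤ s := by
      have hcube : (-1 + 20 * α + 8 * α ^ 2) ^ 2 ≤ (1 + 8 * α) ^ 3 := by
        nlinarith [mul_nonneg (mul_nonneg hα.le (sub_nonneg.mpr h1)) (sq_nonneg (α - 1))]
      calc -1 + 20 * α + 8 * α ^ 2 ≤ |(-1 + 20 * α + 8 * α ^ 2)| := le_abs_self _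
        _ = Real.sqrt ((-1 + 20 * α + 8 * α ^ 2) ^ 2) := (Real.sqrt_sq_eq_abs _).symm
        _ ≤ s := Real.sqrt_le_sqrt hcube
    have hnum : -1 + 20 * α + 8 * α ^ 2 - s ≤ 0 := by linarith
    exact div_nonpos_of_nonpos_of_nonneg hnum (le_of_lt h8)
  · intro h1
    have hlt : s < -1 + 20 * α + 8 * α ^ 2 := by
      nlinarith [mul_pos (mul_pos hα (sub_pos.mpr h1)) (mul_pos (sub_pos.mpr h1) (sub_pos.mpr h1))]
    exact div_pos (by linarith) h8
  · show (4:ℝ) ≤ (-1 + 20 * α + 8 * α ^ 2 + s) / (8 * α)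
    rw [le_div_iff₀ h8]
    have key : 1 + 12 * α - 8 * α ^ 2 ≤ s := by
      rcases le_or_gt (1 + 12 * α - 8 * α ^ 2) 0 with h | h
      · linarith
      · have h2 : α ^ 2 ≤ 11 * α + 1 := by nlinarith
        have hcube : (1 + 12 * α - 8 * α ^ 2) ^ 2 ≤ (1 + 8 * α) ^ 3 := by
          nlinarith [mul_nonneg (sq_nonneg α) (sub_nonneg.mpr h2)]
        calc 1 + 12 * α - 8 * α ^ 2 ≤ |1 + 12 * α - 8 * α ^ 2| := le_abs_self _
          _ = Real.sqrt ((1 + 12 * α - 8 * α ^ 2) ^ 2) := (Real.sqrt_sq_eq_abs _).symm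
          _ ≤ s := Real.sqrt_le_sqrt hcube
    linarith
end

section
/- For M = 3 with α₁ = α₂ = α₃ = α > 0, the edge points λ_± = (2 ± 2√((1+3α)³(9α-1)²) + 9α(-1+3α(4+α)))/(27α²) satisfy λ₊ > 0 for all α > 0, and at α = 1 one has λ₊ = 256/27 and λ₋ = 0. -/
/-- For M = 3 with α₁ = α₂ = α₃ = α > 0, the edge points
λ_± = (2 ± 2√((1+3α)³(9α-1)²) + 9α(-1+3α(4+α)))/(27α²) satisfy λ₊ > 0 for all
α > 0, and at α = 1 one has λ₊ = 256/27 and λ₋ = 0. -/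
theorem m3_equal_alpha_edges (α : ℝ) (hα : 0 < α) :
    let lamP : ℝ := (2 + 2 * Real.sqrt ((1 + 3 * α) ^ 3 * (9 * α - 1) ^ 2)
        + 9 * α * (-1 + 3 * α * (4 + α))) / (27 * α ^ 2)
    let lamM : ℝ := (2 - 2 * Real.sqrt ((1 + 3 * α) ^ 3 * (9 * α - 1) ^ 2)
        + 9 * α * (-1 + 3 * α * (4 + α))) / (27 * α ^ 2)
    0 < lamP ∧ (α = 1 → lamP = 256 / 27 ∧ lamM = 0) := by
  intro lamP lamM
  constructor
  · apply div_pos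
    · have hs := Real.sqrt_nonneg ((1 + 3 * α) ^ 3 * (9 * α - 1) ^ 2)
      nlinarith [sq_nonneg (α - 1/24), sq_nonneg α, hα.le]
    · positivity
  · intro h1
    subst h1
    have hs : Real.sqrt ((1 + 3 * (1:ℝ)) ^ 3 * (9 * 1 - 1) ^ 2) = 64 := by
      rw [show (1 + 3 * (1:ℝ)) ^ 3 * (9 * 1 - 1) ^ 2 = 64 ^ 2 by norm_num,
        Real.sqrt_sq (by norm_num)]
    constructor <;> simp only [lamP, lamM, hs] <;> norm_num
end

section
/- The Fuss–Catalan density series ρ_M(λ) = (1/π) Σ_{n≥1} ((-1)^{n-1}/n) binom(n/(M+1), n-1) λ^{n/(M+1)-1} sin(πn/(M+1)) specializes for M = 1 to ρ₁(λ) = (1/(2π)) √((4-λ)/λ) for λ ∈ (0,4). -/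
/-- Generalized binomial coefficient x(x-1)⋯(x-k+1)/k!. -/
noncomputable def genBinom (x : ℝ) (k : ℕ) : ℝ :=
  (∏ i ∈ Finset.range k, (x - i)) / (Nat.factorial k)

open Complex in
lemma iter_deriv_sqrt (n : ℕ) : ∀ z : ℂ, 0 < (1 + z).re →
    iteratedDeriv n (fun w : ℂ => (1 + w) ^ (2⁻¹ : ℂ)) z
      = (∏ i ∈ Finset.range n, ((2⁻¹ : ℂ) - i)) * (1 + z) ^ ((2⁻¹ : ℂ) - n) := by
  induction n with
  | zero => intro z hz; simp
  | succ n ih =>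
    intro z hz
    have hopen : IsOpen {w : ℂ | 0 < (1 + w).re} :=
      isOpen_lt continuous_const (Complex.continuous_re.comp (by continuity))
    rw [iteratedDeriv_succ]
    have hev : iteratedDeriv n (fun w : ℂ => (1 + w) ^ (2⁻¹ : ℂ))
        =ᶠ[nhds z] fun w => (∏ i ∈ Finset.range n, ((2⁻¹ : ℂ) - i)) * (1 + w) ^ ((2⁻¹ : ℂ) - n) := by
      filter_upwards [hopen.mem_nhds hz] with w hw using ih w hw
    rw [hev.deriv_eq]
    have hd : HasDerivAt (fun w : ℂ => (1 + w) ^ ((2⁻¹ : ℂ) - n))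
        (((2⁻¹ : ℂ) - n) * (1 + z) ^ ((2⁻¹ : ℂ) - n - 1) * 1) z :=
      HasDerivAt.cpow_const ((hasDerivAt_id z).const_add 1) (Or.inl hz)
    rw [(hd.const_mul _).deriv, Finset.prod_range_succ]
    push_cast
    rw [mul_one, ← mul_assoc]
    congr 1
    ring_nf

lemma hasSum_binom (t : ℝ) (ht : |t| < 1) :
    HasSum (fun n : ℕ => genBinom (1/2) n * t ^ n) (Real.sqrt (1 + t)) := by
  have ht1 : 0 < 1 + t := by cases abs_lt.mp ht; linarith
  have hdiff : DifferentiableOn ℂ (fun w : ℂ => (1 + w) ^ (2⁻¹ : ℂ)) (Metric.ball 0 1) := by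
    intro z hz
    have hre : 0 < (1 + z).re := by
      simp only [Metric.mem_ball, dist_zero_right] at hz
      have := (abs_le.mp (Complex.abs_re_le_norm z)).1
      simp only [Complex.add_re, Complex.one_re]
      linarith
    exact (HasDerivAt.cpow_const ((hasDerivAt_id z).const_add 1) (Or.inl hre)).differentiableAt.differentiableWithinAt
  have hz : (t : ℂ) ∈ Metric.ball (0:ℂ) 1 := by
    simp [Metric.mem_ball, Complex.dist_eq, ht]
  have H := Complex.hasSum_taylorSeries_on_ball hdiff hz
  have Hterm : ∀ n : ℕ, ((n.factorial : ℂ))⁻¹ • ((t:ℂ) - 0) ^ n •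
      iteratedDeriv n (fun w : ℂ => (1 + w) ^ (2⁻¹ : ℂ)) 0
        = ((genBinom (1/2) n * t ^ n : ℝ) : ℂ) := by
    intro n
    rw [iter_deriv_sqrt n 0 (by norm_num)]
    rw [genBinom]
    push_cast
    rw [add_zero, Complex.one_cpow, smul_eq_mul, smul_eq_mul, sub_zero]
    have hfac : ((n.factorial : ℂ)) ≠ 0 := by exact_mod_cast n.factorial_ne_zero
    field_simp
  rw [funext Hterm] at H
  have hRHS : ((1:ℂ) + (t:ℂ)) ^ (2⁻¹ : ℂ) = ((Real.sqrt (1 + t) : ℝ) : ℂ) := by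
    rw [Real.sqrt_eq_rpow, show ((1:ℂ) + (t:ℂ)) = (((1 + t : ℝ)) : ℂ) by push_cast; ring,
      Complex.ofReal_cpow ht1.le]
    norm_num
  rw [hRHS] at H
  exact_mod_cast Complex.hasSum_ofReal.mp H

lemma genBinom_half (m : ℕ) :
    genBinom ((2 * (m:ℝ) + 1) / 2) (2 * m) = (2 * (m:ℝ) + 1) * genBinom (1/2) m / 4 ^ m := by
  induction m with
  | zero => simp [genBinom]
  | succ m ih =>
    have hfm : ((m.factorial : ℝ)) ≠ 0 := by exact_mod_cast m.factorial_ne_zero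
    have hf2m : (((2*m).factorial : ℝ)) ≠ 0 := by exact_mod_cast (2*m).factorial_ne_zero
    have h4 : ((4:ℝ)) ^ m ≠ 0 := by positivity
    -- from ih: product identity
    have ihP : ∏ i ∈ Finset.range (2*m), ((2 * (m:ℝ) + 1) / 2 - i)
        = (2 * (m:ℝ) + 1) * (∏ i ∈ Finset.range m, ((1:ℝ)/2 - i)) * (2*m).factorial
          / (m.factorial * 4 ^ m) := by
      have := ih
      unfold genBinom at this
      field_simp at this ⊢
      linarith [this]
    unfold genBinom
    have e1 : 2 * (m+1) = (2*m+1) + 1 := by ring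
    rw [e1, Finset.prod_range_succ', Finset.prod_range_succ, Finset.prod_range_succ,
      Nat.factorial_succ, Nat.factorial_succ, Nat.factorial_succ]
    push_cast
    have e2 : ∀ i ∈ Finset.range (2*m),
        (2 * ((m:ℝ) + 1) + 1) / 2 - ((i:ℝ) + 1) = (2 * (m:ℝ) + 1) / 2 - i := by
      intro i _; ring
    rw [Finset.prod_congr rfl e2, ihP]
    field_simp
    ring


/-- The Fuss–Catalan density series for M = 1,
ρ₁(λ) = (1/π) Σ_{n≥1} ((-1)^{n-1}/n) C(n/2, n-1) λ^{n/2-1} sin(πn/2),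
converges for 0 < λ < 4 to the Marcenko–Pastur form (1/(2π))√((4-λ)/λ). -/
theorem fuss_catalan_M1 (x : ℝ) (hx0 : 0 < x) (hx4 : x < 4) :
    HasSum
      (fun n : ℕ =>
        (1 / Real.pi) * ((-1 : ℝ) ^ n / (n + 1)) * genBinom (((n : ℝ) + 1) / 2) n
          * x ^ (((n : ℝ) + 1) / 2 - 1) * Real.sin (Real.pi * ((n : ℝ) + 1) / 2))
      ((1 / (2 * Real.pi)) * Real.sqrt ((4 - x) / x)) := by
  have hinj : Function.Injective (fun m : ℕ => 2 * m) :=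
    mul_right_injective₀ (two_ne_zero)
  refine (hinj.hasSum_iff ?_).mp ?_
  · -- odd terms vanish
    intro n hn
    have hodd : ∃ k, n = 2 * k + 1 := by
      rcases Nat.even_or_odd n with ⟨k, hk⟩ | ⟨k, hk⟩
      · exact absurd ⟨k, by show 2 * k = n; omega⟩ hn
      · exact ⟨k, hk⟩
    obtain ⟨k, rfl⟩ := hodd
    have hs : Real.pi * (((2 * k + 1 : ℕ) : ℝ) + 1) / 2 = ((k + 1 : ℕ) : ℝ) * Real.pi := by
      push_cast; ring
    rw [hs, Real.sin_nat_mul_pi, mul_zero]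
  · -- even part
    have ht : |(-(x/4))| < 1 := by rw [abs_neg, abs_of_pos (by linarith)]; linarith
    have hb := (hasSum_binom (-(x/4)) ht).mul_left ((1 / Real.pi) * x ^ (-(1/2) : ℝ))
    have hval : 1 / Real.pi * x ^ (-(1/2) : ℝ) * Real.sqrt (1 + -(x/4))
        = 1 / (2 * Real.pi) * Real.sqrt ((4 - x)/x) := by
      have h14 : (1:ℝ) + -(x/4) = (4-x)/4 := by ring
      rw [h14, Real.sqrt_div (by linarith : (0:ℝ) ≤ 4 - x),
        Real.sqrt_div (by linarith : (0:ℝ) ≤ 4 - x),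
        show Real.sqrt 4 = 2 by
          rw [show (4:ℝ) = 2^2 by norm_num, Real.sqrt_sq (by norm_num)],
        Real.rpow_neg hx0.le, ← Real.sqrt_eq_rpow]
      ring
    rw [hval] at hb
    convert hb using 1
    · rfl
    funext m
    · simp only [Function.comp_apply]
      have hs : Real.sin (Real.pi * (((2 * m : ℕ) : ℝ) + 1) / 2) = (-1 : ℝ) ^ m := by
        have h1 : Real.pi * (((2 * m : ℕ) : ℝ) + 1) / 2 = Real.pi / 2 + (m : ℤ) * Real.pi := by
          push_cast; ring
        rw [h1, Real.sin_add_int_mul_pi, Real.sin_pi_div_two, zpow_natCast]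
        norm_num
      have hg : genBinom ((((2 * m : ℕ) : ℝ) + 1) / 2) (2 * m)
          = (2 * (m : ℝ) + 1) * genBinom (1/2) m / 4 ^ m := by
        rw [show (((2 * m : ℕ) : ℝ) + 1) / 2 = (2 * (m:ℝ) + 1) / 2 by push_cast; ring]
        exact genBinom_half m
      have hr : x ^ ((((2 * m : ℕ) : ℝ) + 1) / 2 - 1) = x ^ (m : ℕ) * x ^ (-(1/2) : ℝ) := by
        rw [← Real.rpow_natCast x m, ← Real.rpow_add hx0]
        congr 1
        push_cast; ring
      rw [hs, hg, hr]
      have h2m : (2 * (m:ℝ) + 1) ≠ 0 := by positivity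
      push_cast
      field_simp
      ring_nf
      have h4 : ((-1/4 : ℝ))^m * 4^m = (-1)^m := by rw [← mul_pow]; norm_num
      rw [mul_assoc _ ((-1/4:ℝ)^m), h4, pow_mul']
      norm_num
end
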